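/- Let α > 0 and let (u,f) be a pair of real-valued functions on (0,∞), absolutely continuous on compact subintervals of (0,∞), with lim_{r→0} u(r) = 1, lim_{r→0} f(r) = 0, lim_{r→∞} u(r) = 0, lim_{r→∞} f(r) = 1, and finite energy I(u,f) = ∫₀^∞ [2 u'² + (1−u²)²/r² + α r² f'² + 2α f² u²] dr < ∞. Then I(u,f) ≥ 2√α, with equality if and only if u' + √α f u = 0 and √α r f' = (1−u²)/r almost everywhere on (0,∞). -/

import Mathlib

open MeasureTheory Filter Set Topology

noncomputable section

/-- `g` is absolutely continuous on every compact subinterval of `(0,∞)`,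
with almost-everywhere derivative `g'`. -/
def LocAC (g g' : ℝ → ℝ) : Prop :=
  ∀ a b : ℝ, 0 < a → a ≤ b →
    IntervalIntegrable g' volume a b ∧ g b - g a = ∫ t in a..b, g' t

/-- The integrand of the BPS (`β = 2`, `γ = 0`) energy functional
`I(u,f) = ∫₀^∞ [2 u'² + (1−u²)²/r² + α r² f'² + 2α f² u²] dr`. -/
def bpsIntegrand (α : ℝ) (u u' f f' : ℝ → ℝ) (r : ℝ) : ℝ :=
  2 * u' r ^ 2 + (1 - u r ^ 2) ^ 2 / r ^ 2
    + α * r ^ 2 * f' r ^ 2 + 2 * α * f r ^ 2 * u r ^ 2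

section Aux

/-- A Fubini-type triangle integral computation. -/
lemma tri_integral {a b : ℝ} {φ ψ : ℝ → ℝ}
    (hφ : IntegrableOn φ (Ioc a b)) (hψ : IntegrableOn ψ (Ioc a b))
    {T : Set (ℝ × ℝ)} (hT : MeasurableSet T)
    (hTsec : ∀ s ∈ Ioc a b, ∀ g : ℝ → ℝ,
      (∫ t in Ioc a b ∩ {t | (s, t) ∈ T}, g t) = ∫ t in Ioc a s, g t) :
    (∫ p in (Ioc a b ×ˢ Ioc a b) ∩ T, φ p.1 * ψ p.2 ∂(volume.prod volume))
      = ∫ s in Ioc a b, φ s * ∫ t in Ioc a s, ψ t := by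
  have hsq : IntegrableOn (fun p : ℝ × ℝ => φ p.1 * ψ p.2)
      (Ioc a b ×ˢ Ioc a b) (volume.prod volume) := by
    rw [IntegrableOn, ← Measure.prod_restrict]
    exact hφ.mul_prod hψ
  have hind : IntegrableOn (T.indicator fun p : ℝ × ℝ => φ p.1 * ψ p.2)
      (Ioc a b ×ˢ Ioc a b) (volume.prod volume) := hsq.indicator hT
  calc (∫ p in (Ioc a b ×ˢ Ioc a b) ∩ T, φ p.1 * ψ p.2 ∂(volume.prod volume))
      = ∫ p in Ioc a b ×ˢ Ioc a b,
          T.indicator (fun p : ℝ × ℝ => φ p.1 * ψ p.2) p ∂(volume.prod volume) :=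
        (setIntegral_indicator hT).symm
    _ = ∫ s in Ioc a b, ∫ t in Ioc a b,
          T.indicator (fun p : ℝ × ℝ => φ p.1 * ψ p.2) (s, t) := by
        exact setIntegral_prod _ hind
    _ = ∫ s in Ioc a b, φ s * ∫ t in Ioc a s, ψ t := by
        refine setIntegral_congr_fun measurableSet_Ioc (fun s hs => ?_)
        have hsec : MeasurableSet {t : ℝ | (s, t) ∈ T} := hT.preimage measurable_prodMk_left
        have h1 : ∀ t : ℝ, T.indicator (fun p : ℝ × ℝ => φ p.1 * ψ p.2) (s, t)
            = ({t : ℝ | (s, t) ∈ T}).indicator (fun t => φ s * ψ t) t := by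
          intro t
          by_cases h : (s, t) ∈ T <;> simp [Set.indicator_apply, h]
        simp only [h1]
        rw [setIntegral_indicator hsec, hTsec s hs, integral_const_mul]

lemma parts_aux {a b : ℝ} {φ ψ : ℝ → ℝ}
    (hφ : IntegrableOn φ (Ioc a b)) (hψ : IntegrableOn ψ (Ioc a b)) :
    (∫ s in Ioc a b, φ s * ∫ t in Ioc a s, ψ t)
      + (∫ s in Ioc a b, ψ s * ∫ t in Ioc a s, φ t)
      = (∫ s in Ioc a b, φ s) * (∫ s in Ioc a b, ψ s) := by
  set sq : Set (ℝ × ℝ) := Ioc a b ×ˢ Ioc a b with hsq_def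
  have hT1 : MeasurableSet {p : ℝ × ℝ | p.2 ≤ p.1} :=
    measurableSet_le measurable_snd measurable_fst
  have hT2 : MeasurableSet {p : ℝ × ℝ | p.1 < p.2} :=
    measurableSet_lt measurable_fst measurable_snd
  have hT3 : MeasurableSet {p : ℝ × ℝ | p.2 < p.1} :=
    measurableSet_lt measurable_snd measurable_fst
  have hsqm : MeasurableSet sq := measurableSet_Ioc.prod measurableSet_Ioc
  have hsqint : IntegrableOn (fun p : ℝ × ℝ => φ p.1 * ψ p.2) sq (volume.prod volume) := by
    rw [IntegrableOn, hsq_def, ← Measure.prod_restrict]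
    exact hφ.mul_prod hψ
  -- first triangle
  have h1 : (∫ p in sq ∩ {p : ℝ × ℝ | p.2 ≤ p.1}, φ p.1 * ψ p.2 ∂(volume.prod volume))
      = ∫ s in Ioc a b, φ s * ∫ t in Ioc a s, ψ t := by
    refine tri_integral hφ hψ hT1 (fun s hs g => ?_)
    have : Ioc a b ∩ {t : ℝ | (s, t) ∈ {p : ℝ × ℝ | p.2 ≤ p.1}} = Ioc a s := by
      ext t
      simp only [mem_inter_iff, mem_Ioc, mem_setOf_eq]
      constructor
      · rintro ⟨⟨h1, h2⟩, h3⟩; exact ⟨h1, h3⟩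
      · rintro ⟨h1, h3⟩; exact ⟨⟨h1, h3.trans hs.2⟩, h3⟩
    rw [this]
  -- second triangle (strict, swapped)
  have h2 : (∫ p in sq ∩ {p : ℝ × ℝ | p.1 < p.2}, φ p.1 * ψ p.2 ∂(volume.prod volume))
      = ∫ s in Ioc a b, ψ s * ∫ t in Ioc a s, φ t := by
    have himg : Prod.swap '' (sq ∩ {p : ℝ × ℝ | p.2 < p.1})
        = sq ∩ {p : ℝ × ℝ | p.1 < p.2} := by
      ext p
      simp only [Set.image_swap_eq_preimage_swap, mem_preimage, Prod.fst_swap, Prod.snd_swap,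
        mem_inter_iff, mem_setOf_eq, hsq_def, mem_prod]
      tauto
    have hswap := (Measure.measurePreserving_swap
      (μ := (volume : Measure ℝ)) (ν := (volume : Measure ℝ))).setIntegral_image_emb
      MeasurableEquiv.prodComm.measurableEmbedding
      (fun p : ℝ × ℝ => φ p.1 * ψ p.2) (sq ∩ {p : ℝ × ℝ | p.2 < p.1})
    rw [himg] at hswap
    rw [hswap]
    have : (∫ p in sq ∩ {p : ℝ × ℝ | p.2 < p.1}, ψ p.1 * φ p.2 ∂(volume.prod volume))
        = ∫ s in Ioc a b, ψ s * ∫ t in Ioc a s, φ t := by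
      refine tri_integral hψ hφ hT3 (fun s hs g => ?_)
      have hset : Ioc a b ∩ {t : ℝ | (s, t) ∈ {p : ℝ × ℝ | p.2 < p.1}} = Ioo a s := by
        ext t
        simp only [mem_inter_iff, mem_Ioc, mem_setOf_eq, mem_Ioo]
        constructor
        · rintro ⟨⟨h1, h2⟩, h3⟩; exact ⟨h1, h3⟩
        · rintro ⟨h1, h3⟩; exact ⟨⟨h1, h3.le.trans hs.2⟩, h3⟩
      rw [hset, integral_Ioc_eq_integral_Ioo]
    rw [← this]
    congr 1
    ext p
    simp [Prod.swap, mul_comm]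
  have hdisj : Disjoint (sq ∩ {p : ℝ × ℝ | p.2 ≤ p.1}) (sq ∩ {p : ℝ × ℝ | p.1 < p.2}) := by
    rw [Set.disjoint_left]
    rintro p ⟨-, h1⟩ ⟨-, h2⟩
    simp only [mem_setOf_eq] at h1 h2
    exact absurd h2 (not_lt.mpr h1)
  have hunion : (sq ∩ {p : ℝ × ℝ | p.2 ≤ p.1}) ∪ (sq ∩ {p : ℝ × ℝ | p.1 < p.2}) = sq := by
    rw [← Set.inter_union_distrib_left]
    have : {p : ℝ × ℝ | p.2 ≤ p.1} ∪ {p : ℝ × ℝ | p.1 < p.2} = univ := by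
      ext p; simp [le_or_gt]
    rw [this, Set.inter_univ]
  have hsum := setIntegral_union hdisj (hsqm.inter hT2)
    (hsqint.mono_set Set.inter_subset_left) (hsqint.mono_set Set.inter_subset_left)
    (f := fun p : ℝ × ℝ => φ p.1 * ψ p.2)
  rw [hunion] at hsum
  have hprod : (∫ p in sq, φ p.1 * ψ p.2 ∂(volume.prod volume))
      = (∫ s in Ioc a b, φ s) * (∫ s in Ioc a b, ψ s) := by
    rw [hsq_def, ← Measure.prod_restrict]
    exact integral_prod_mul φ ψ
  rw [← h1, ← h2, ← hsum, hprod]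

lemma LocAC.continuousOn {g g' : ℝ → ℝ} (hg : LocAC g g') {a b : ℝ}
    (ha : 0 < a) (hab : a ≤ b) : ContinuousOn g (Icc a b) := by
  have hInt : IntegrableOn g' (Icc a b) := by
    rw [integrableOn_Icc_iff_integrableOn_Ioc]
    exact (intervalIntegrable_iff_integrableOn_Ioc_of_le hab).1 (hg a b ha hab).1
  have hc : ContinuousOn (fun x => g a + ∫ t in Ioc a x, g' t) (Icc a b) :=
    continuousOn_const.add (intervalIntegral.continuousOn_primitive hInt)
  refine hc.congr (fun x hx => ?_)
  have h := (hg a x ha hx.1).2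
  rw [intervalIntegral.integral_of_le hx.1] at h
  linarith

lemma LocAC.mul {p q p' q' : ℝ → ℝ} (hp : LocAC p p') (hq : LocAC q q') :
    LocAC (fun r => p r * q r) (fun r => p' r * q r + p r * q' r) := by
  intro a b ha hab
  have hpII := (hp a b ha hab).1
  have hqII := (hq a b ha hab).1
  have hpI : IntegrableOn p' (Ioc a b) :=
    (intervalIntegrable_iff_integrableOn_Ioc_of_le hab).1 hpII
  have hqI : IntegrableOn q' (Ioc a b) :=
    (intervalIntegrable_iff_integrableOn_Ioc_of_le hab).1 hqII
  have hpc : ContinuousOn p (Icc a b) := hp.continuousOn ha hab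
  have hqc : ContinuousOn q (Icc a b) := hq.continuousOn ha hab
  have huIcc : Set.uIcc a b = Icc a b := uIcc_of_le hab
  have hint1 : IntervalIntegrable (fun x => p' x * q x) volume a b :=
    hpII.mul_continuousOn (by rw [huIcc]; exact hqc)
  have hint2 : IntervalIntegrable (fun x => p x * q' x) volume a b :=
    hqII.continuousOn_mul (by rw [huIcc]; exact hpc)
  refine ⟨hint1.add hint2, ?_⟩
  have h1 : IntegrableOn (fun x => p' x * q x) (Ioc a b) :=
    (intervalIntegrable_iff_integrableOn_Ioc_of_le hab).1 hint1
  have h2 : IntegrableOn (fun x => p x * q' x) (Ioc a b) :=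
    (intervalIntegrable_iff_integrableOn_Ioc_of_le hab).1 hint2
  have hpx : ∀ x ∈ Icc a b, p x = p a + ∫ t in Ioc a x, p' t := by
    intro x hx
    have h := (hp a x ha hx.1).2
    rw [intervalIntegral.integral_of_le hx.1] at h
    linarith
  have hqx : ∀ x ∈ Icc a b, q x = q a + ∫ t in Ioc a x, q' t := by
    intro x hx
    have h := (hq a x ha hx.1).2
    rw [intervalIntegral.integral_of_le hx.1] at h
    linarith
  have hPQint : IntegrableOn (fun x => p' x * ∫ t in Ioc a x, q' t) (Ioc a b) := by
    refine (h1.sub (hpI.mul_const (q a))).congr ?_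
    filter_upwards [ae_restrict_mem measurableSet_Ioc] with x hx
    simp only [Pi.sub_apply]
    rw [hqx x ⟨le_of_lt hx.1, hx.2⟩]; ring
  have hQPint : IntegrableOn (fun x => q' x * ∫ t in Ioc a x, p' t) (Ioc a b) := by
    refine (h2.sub (hqI.const_mul (p a))).congr ?_
    filter_upwards [ae_restrict_mem measurableSet_Ioc] with x hx
    simp only [Pi.sub_apply]
    rw [hpx x ⟨le_of_lt hx.1, hx.2⟩]; ring
  have e1 : (∫ x in Ioc a b, p' x * q x)
      = q a * (∫ x in Ioc a b, p' x) + ∫ x in Ioc a b, p' x * ∫ t in Ioc a x, q' t := by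
    have he : (∫ x in Ioc a b, p' x * q x)
        = ∫ x in Ioc a b, (q a * p' x + p' x * ∫ t in Ioc a x, q' t) := by
      refine setIntegral_congr_fun measurableSet_Ioc (fun x hx => ?_)
      rw [hqx x ⟨le_of_lt hx.1, hx.2⟩]; ring
    rw [he, integral_add (hpI.const_mul (q a)) hPQint, integral_const_mul]
  have e2 : (∫ x in Ioc a b, p x * q' x)
      = p a * (∫ x in Ioc a b, q' x) + ∫ x in Ioc a b, q' x * ∫ t in Ioc a x, p' t := by
    have he : (∫ x in Ioc a b, p x * q' x)
        = ∫ x in Ioc a b, (p a * q' x + q' x * ∫ t in Ioc a x, p' t) := by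
      refine setIntegral_congr_fun measurableSet_Ioc (fun x hx => ?_)
      rw [hpx x ⟨le_of_lt hx.1, hx.2⟩]; ring
    rw [he, integral_add (hqI.const_mul (p a)) hQPint, integral_const_mul]
  have hparts := parts_aux hpI hqI
  have hPb : (∫ x in Ioc a b, p' x) = p b - p a := by
    have h := (hp a b ha hab).2
    rw [intervalIntegral.integral_of_le hab] at h
    linarith
  have hQb : (∫ x in Ioc a b, q' x) = q b - q a := by
    have h := (hq a b ha hab).2
    rw [intervalIntegral.integral_of_le hab] at h
    linarith
  rw [hPb, hQb] at hparts
  show p b * q b - p a * q a = _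
  rw [intervalIntegral.integral_of_le hab, integral_add h1 h2, e1, e2, hPb, hQb]
  linear_combination -hparts

lemma LocAC.const_sub {g g' : ℝ → ℝ} (hg : LocAC g g') (c : ℝ) :
    LocAC (fun r => c - g r) (fun r => -(g' r)) := by
  intro a b ha hab
  obtain ⟨h1, h2⟩ := hg a b ha hab
  refine ⟨h1.neg, ?_⟩
  rw [intervalIntegral.integral_neg, ← h2]
  ring

lemma Sn_union : (⋃ n : ℕ, Ioc (((n : ℝ) + 1)⁻¹) ((n : ℝ) + 1)) = Ioi (0 : ℝ) := by
  ext r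
  simp only [mem_iUnion, mem_Ioc, mem_Ioi]
  constructor
  · rintro ⟨n, h1, h2⟩
    exact lt_trans (by positivity) h1
  · intro hr
    obtain ⟨n, hn⟩ := exists_nat_gt (max r⁻¹ r)
    refine ⟨n, ?_, ?_⟩
    · have h1 : r⁻¹ < (n : ℝ) + 1 := lt_trans (lt_of_le_of_lt (le_max_left _ _) hn) (by linarith)
      have h2 : (0 : ℝ) < (n : ℝ) + 1 := by positivity
      rw [inv_lt_iff_one_lt_mul₀ hr] at h1
      rw [inv_lt_iff_one_lt_mul₀ h2]
      linarith [h1]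
    · exact le_trans (le_of_lt (lt_of_le_of_lt (le_max_right _ _) hn)) (by linarith)

lemma LocAC.aesm {g g' : ℝ → ℝ} (hg : LocAC g g') :
    AEStronglyMeasurable g (volume.restrict (Ioi 0))
      ∧ AEStronglyMeasurable g' (volume.restrict (Ioi 0)) := by
  rw [← Sn_union]
  constructor <;> rw [aestronglyMeasurable_iUnion_iff] <;> intro n
  · have hpos : (0 : ℝ) < ((n : ℝ) + 1)⁻¹ := by positivity
    have hle : ((n : ℝ) + 1)⁻¹ ≤ (n : ℝ) + 1 := by
      have h1 : (1 : ℝ) ≤ (n : ℝ) + 1 := by linarith [(Nat.cast_nonneg n : (0:ℝ) ≤ n)]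
      calc ((n : ℝ) + 1)⁻¹ ≤ 1 := inv_le_one_of_one_le₀ h1
        _ ≤ (n : ℝ) + 1 := h1
    exact ((hg.continuousOn hpos hle).mono Ioc_subset_Icc_self).aestronglyMeasurable
      measurableSet_Ioc
  · have hpos : (0 : ℝ) < ((n : ℝ) + 1)⁻¹ := by positivity
    have hle : ((n : ℝ) + 1)⁻¹ ≤ (n : ℝ) + 1 := by
      have h1 : (1 : ℝ) ≤ (n : ℝ) + 1 := by linarith [(Nat.cast_nonneg n : (0:ℝ) ≤ n)]
      calc ((n : ℝ) + 1)⁻¹ ≤ 1 := inv_le_one_of_one_le₀ h1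
        _ ≤ (n : ℝ) + 1 := h1
    exact ((intervalIntegrable_iff_integrableOn_Ioc_of_le hle).1
      (hg _ _ hpos hle).1).aestronglyMeasurable

lemma key_alg (s r U U' F F' : ℝ) (hr : r ≠ 0) :
    2 * U' ^ 2 + (1 - U ^ 2) ^ 2 / r ^ 2 + s ^ 2 * r ^ 2 * F' ^ 2
        + 2 * s ^ 2 * F ^ 2 * U ^ 2
      = 2 * (U' + s * F * U) ^ 2 + (s * r * F' - (1 - U ^ 2) / r) ^ 2
        + 2 * s * (F' * (1 - U * U) + F * (-(U' * U + U * U'))) := by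
  field_simp
  ring

lemma bound_alg (s r U U' F F' : ℝ) (hr : 0 < r) :
    |2 * s * (F' * (1 - U * U) + F * (-(U' * U + U * U')))|
      ≤ 2 * U' ^ 2 + (1 - U ^ 2) ^ 2 / r ^ 2 + s ^ 2 * r ^ 2 * F' ^ 2
        + 2 * s ^ 2 * F ^ 2 * U ^ 2 := by
  have hr' : r ≠ 0 := ne_of_gt hr
  have h1 : (1 - U ^ 2) ^ 2 / r ^ 2 = ((1 - U ^ 2) / r) ^ 2 := (div_pow _ _ _).symm
  have h2 : 2 * s * (F' * (1 - U * U) + F * (-(U' * U + U * U')))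
      = 2 * (s * r * F') * ((1 - U ^ 2) / r) - 4 * (s * F * U) * U' := by
    field_simp
    ring
  rw [h1, h2, abs_le]
  constructor <;>
    nlinarith [sq_nonneg (s * r * F' - (1 - U ^ 2) / r), sq_nonneg (s * r * F' + (1 - U ^ 2) / r),
      sq_nonneg (U' - s * F * U), sq_nonneg (U' + s * F * U)]

lemma zero_alg (x y : ℝ) : 2 * x ^ 2 + y ^ 2 = 0 ↔ x = 0 ∧ y = 0 := by
  constructor
  · intro h
    constructor <;> nlinarith [sq_nonneg x, sq_nonneg y]
  · rintro ⟨rfl, rfl⟩; ring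

end Aux

/-- the Bogomolny bound `I(u,f) ≥ 2√α`, with equality if and only if the
first-order BPS equations hold almost everywhere on `(0,∞)`. -/
theorem bogomolny_bound (α : ℝ) (hα : 0 < α) (u u' f f' : ℝ → ℝ)
    (hu : LocAC u u') (hf : LocAC f f')
    (hu0 : Tendsto u (𝓝[>] (0 : ℝ)) (𝓝 1))
    (hf0 : Tendsto f (𝓝[>] (0 : ℝ)) (𝓝 0))
    (huinf : Tendsto u atTop (𝓝 0))
    (hfinf : Tendsto f atTop (𝓝 1))
    (hfin : IntegrableOn (bpsIntegrand α u u' f f') (Ioi 0)) :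
    2 * Real.sqrt α ≤ ∫ r in Ioi (0 : ℝ), bpsIntegrand α u u' f f' r ∧
      ((∫ r in Ioi (0 : ℝ), bpsIntegrand α u u' f f' r) = 2 * Real.sqrt α ↔
        ∀ᵐ r ∂(volume.restrict (Ioi (0 : ℝ))),
          u' r + Real.sqrt α * f r * u r = 0 ∧
          Real.sqrt α * r * f' r = (1 - u r ^ 2) / r) := by
  set s := Real.sqrt α with hs_def
  have hs0 : 0 < s := Real.sqrt_pos.mpr hα
  have hs2 : s ^ 2 = α := Real.sq_sqrt hα.le
  -- the boundary function G and the derivative data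
  have hw : LocAC (fun r => 1 - u r * u r) (fun r => -(u' r * u r + u r * u' r)) :=
    (hu.mul hu).const_sub 1
  set G : ℝ → ℝ := fun r => f r * (1 - u r * u r) with hG
  set G' : ℝ → ℝ := fun r =>
    f' r * (1 - u r * u r) + f r * (-(u' r * u r + u r * u' r)) with hG'
  have hg : LocAC G G' := hf.mul hw
  set C : ℝ → ℝ := fun r => 2 * s * G' r with hC
  set Q : ℝ → ℝ := fun r =>
    2 * (u' r + s * f r * u r) ^ 2 + (s * r * f' r - (1 - u r ^ 2) / r) ^ 2 with hQ
  have hsplit : ∀ r ∈ Ioi (0 : ℝ), bpsIntegrand α u u' f f' r = Q r + C r := by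
    intro r hr
    have h := key_alg s r (u r) (u' r) (f r) (f' r) (ne_of_gt hr)
    rw [hs2] at h
    simp only [hQ, hC, hG', bpsIntegrand]
    linarith [h]
  have hbps_nn : ∀ r : ℝ, 0 ≤ bpsIntegrand α u u' f f' r := by
    intro r
    unfold bpsIntegrand
    have h1 : 0 ≤ (1 - u r ^ 2) ^ 2 / r ^ 2 := div_nonneg (sq_nonneg _) (sq_nonneg _)
    nlinarith [sq_nonneg (u' r), mul_nonneg hα.le (sq_nonneg (r * f' r)),
      mul_nonneg hα.le (sq_nonneg (f r * u r))]
  -- measurability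
  obtain ⟨hu_m, hu'_m⟩ := hu.aesm
  obtain ⟨hf_m, hf'_m⟩ := hf.aesm
  have hC_m : AEStronglyMeasurable C (volume.restrict (Ioi 0)) := by
    simp only [hC, hG']
    exact (((hf'_m.mul ((aestronglyMeasurable_const.sub (hu_m.mul hu_m)))).add
      (hf_m.mul ((hu'_m.mul hu_m).add (hu_m.mul hu'_m)).neg))).const_mul (2 * s)
  have hCint : IntegrableOn C (Ioi 0) := by
    refine Integrable.mono hfin hC_m ?_
    filter_upwards [ae_restrict_mem measurableSet_Ioi] with r hr
    rw [Real.norm_eq_abs, Real.norm_eq_abs, abs_of_nonneg (hbps_nn r)]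
    have h := bound_alg s r (u r) (u' r) (f r) (f' r) hr
    rw [hs2] at h
    simp only [hC, hG']
    calc |2 * s * (f' r * (1 - u r * u r) + f r * (-(u' r * u r + u r * u' r)))| ≤ _ := h
      _ = bpsIntegrand α u u' f f' r := by unfold bpsIntegrand; ring
  have hQint : IntegrableOn Q (Ioi 0) := by
    refine (hfin.sub hCint).congr ?_
    filter_upwards [ae_restrict_mem measurableSet_Ioi] with r hr
    simp only [Pi.sub_apply]
    have := hsplit r hr
    linarith
  have hIbps : (∫ r in Ioi (0 : ℝ), bpsIntegrand α u u' f f' r)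
      = (∫ r in Ioi (0 : ℝ), Q r) + ∫ r in Ioi (0 : ℝ), C r := by
    rw [← integral_add hQint hCint]
    exact setIntegral_congr_fun measurableSet_Ioi (fun r hr => hsplit r hr)
  -- value of ∫ C
  have hCval : (∫ r in Ioi (0 : ℝ), C r) = 2 * s := by
    set Sn : ℕ → Set ℝ := fun n => Ioc (((n : ℝ) + 1)⁻¹) ((n : ℝ) + 1) with hSn
    have hSmeas : ∀ n, MeasurableSet (Sn n) := fun n => measurableSet_Ioc
    have hSmono : Monotone Sn := by
      intro m n hmn
      apply Ioc_subset_Ioc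
      · apply inv_anti₀ (by positivity)
        exact add_le_add_left (Nat.cast_le.mpr hmn) 1
      · exact add_le_add_left (Nat.cast_le.mpr hmn) 1
    have hSun : (⋃ n, Sn n) = Ioi (0 : ℝ) := Sn_union
    have t1 : Tendsto (fun n : ℕ => ∫ r in Sn n, C r) atTop
        (𝓝 (∫ r in Ioi (0 : ℝ), C r)) := by
      have := tendsto_setIntegral_of_monotone hSmeas hSmono (by rw [hSun]; exact hCint)
      rwa [hSun] at this
    have t2val : ∀ n : ℕ, (∫ r in Sn n, C r)
        = 2 * s * (G ((n : ℝ) + 1) - G (((n : ℝ) + 1)⁻¹)) := by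
      intro n
      have hpos : (0 : ℝ) < ((n : ℝ) + 1)⁻¹ := by positivity
      have hle : ((n : ℝ) + 1)⁻¹ ≤ (n : ℝ) + 1 := by
        have h1 : (1 : ℝ) ≤ (n : ℝ) + 1 := by linarith [(Nat.cast_nonneg n : (0:ℝ) ≤ n)]
        calc ((n : ℝ) + 1)⁻¹ ≤ 1 := inv_le_one_of_one_le₀ h1
          _ ≤ (n : ℝ) + 1 := h1
      obtain ⟨hint, heq⟩ := hg _ _ hpos hle
      have : (∫ r in Sn n, C r) = ∫ r in (((n : ℝ) + 1)⁻¹)..((n : ℝ) + 1), C r := by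
        rw [intervalIntegral.integral_of_le hle]
      rw [this]
      simp only [hC]
      rw [intervalIntegral.integral_const_mul, ← heq]
    have t2 : Tendsto (fun n : ℕ => 2 * s * (G ((n : ℝ) + 1) - G (((n : ℝ) + 1)⁻¹)))
        atTop (𝓝 (2 * s * (1 - 0))) := by
      have hnat : Tendsto (fun n : ℕ => ((n : ℝ) + 1)) atTop atTop :=
        tendsto_atTop_add_const_right _ 1 tendsto_natCast_atTop_atTop
      have hftop : Tendsto (fun n : ℕ => f ((n : ℝ) + 1)) atTop (𝓝 1) := hfinf.comp hnat
      have hutop : Tendsto (fun n : ℕ => u ((n : ℝ) + 1)) atTop (𝓝 0) := huinf.comp hnat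
      have hGtop : Tendsto (fun n : ℕ => G ((n : ℝ) + 1)) atTop (𝓝 1) := by
        have h : Tendsto (fun n : ℕ => f ((n : ℝ) + 1) * (1 - u ((n : ℝ) + 1) * u ((n : ℝ) + 1)))
            atTop (𝓝 (1 * (1 - 0 * 0))) :=
          hftop.mul ((tendsto_const_nhds :
              Tendsto (fun _ : ℕ => (1:ℝ)) atTop (𝓝 1)).sub (hutop.mul hutop))
        norm_num at h
        simpa only [hG] using h
      have hinv : Tendsto (fun n : ℕ => ((n : ℝ) + 1)⁻¹) atTop (𝓝[>] 0) := by
        apply tendsto_nhdsWithin_of_tendsto_nhds_of_eventually_within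
        · exact hnat.inv_tendsto_atTop
        · exact Eventually.of_forall fun n => mem_Ioi.2 (by positivity)
      have hfbot : Tendsto (fun n : ℕ => f (((n : ℝ) + 1)⁻¹)) atTop (𝓝 0) := hf0.comp hinv
      have hubot : Tendsto (fun n : ℕ => u (((n : ℝ) + 1)⁻¹)) atTop (𝓝 1) := hu0.comp hinv
      have hGbot : Tendsto (fun n : ℕ => G (((n : ℝ) + 1)⁻¹)) atTop (𝓝 0) := by
        have h : Tendsto
            (fun n : ℕ => f (((n : ℝ) + 1)⁻¹) * (1 - u (((n : ℝ) + 1)⁻¹) * u (((n : ℝ) + 1)⁻¹)))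
            atTop (𝓝 (0 * (1 - 1 * 1))) :=
          hfbot.mul ((tendsto_const_nhds :
              Tendsto (fun _ : ℕ => (1:ℝ)) atTop (𝓝 1)).sub (hubot.mul hubot))
        norm_num at h
        simpa only [hG] using h
      exact (hGtop.sub hGbot).const_mul (2 * s)
    have t1' : Tendsto (fun n : ℕ => 2 * s * (G ((n : ℝ) + 1) - G (((n : ℝ) + 1)⁻¹)))
        atTop (𝓝 (∫ r in Ioi (0 : ℝ), C r)) := t1.congr fun n => t2val n
    have := tendsto_nhds_unique t1' t2
    rw [this]
    ring
  have hQnn : ∀ r : ℝ, 0 ≤ Q r := by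
    intro r
    simp only [hQ]
    positivity
  have hQInn : 0 ≤ ∫ r in Ioi (0 : ℝ), Q r :=
    setIntegral_nonneg measurableSet_Ioi (fun r _ => hQnn r)
  constructor
  · rw [hIbps, hCval]
    linarith
  · rw [hIbps, hCval]
    constructor
    · intro h
      have hQ0 : (∫ r in Ioi (0 : ℝ), Q r) = 0 := by linarith
      have hae := (integral_eq_zero_iff_of_nonneg (fun r => hQnn r) hQint).1 hQ0
      filter_upwards [hae] with r hr
      simp only [Pi.zero_apply, hQ] at hr
      have hz := (zero_alg (u' r + s * f r * u r)
        (s * r * f' r - (1 - u r ^ 2) / r)).1 hr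
      exact ⟨hz.1, sub_eq_zero.1 hz.2⟩
    · intro h
      have hQ0 : (∫ r in Ioi (0 : ℝ), Q r) = 0 := by
        apply integral_eq_zero_of_ae
        filter_upwards [h] with r hr
        have hz : Q r = 0 := by
          simp only [hQ]
          rw [hr.1, sub_eq_zero_of_eq hr.2]
          ring
        simpa using hz
      linarith
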